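/- Let H be a finite Borel measure on [0,1] and R(x,y) = ∫_{[0,1]} min{wx, (1−w)y} H(dw). If (x,y) ∈ (0,∞)² and H({z}) = 0 where z = y/(x+y), then R is differentiable at (x,y) with gradient (R₁(x,y), R₂(x,y))ᵀ given by R₁(x,y) = ∫_{[0,z)} w H(dw) and R₂(x,y) = ∫_{(z,1]} (1−w) H(dw). Moreover, if H satisfies the moment constraints ∫_{[0,1]} w H(dw) = ∫_{[0,1]} (1−w) H(dw) = 1, then 0 ≤ R₁(x,y) ≤ 1 and 0 ≤ R₂(x,y) ≤ 1. -/

import Mathlib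

open MeasureTheory Set

set_option maxHeartbeats 1000000 in
/-- Lemma 7.1 of Einmahl, Krajina, Segers (2008): differentiability of the tail copula `R`
associated with a finite spectral measure `H` on `[0,1]` at points where `H` has no atom
at `z = y/(x+y)`, together with the bounds `0 ≤ R₁, R₂ ≤ 1` under the moment constraints. -/
theorem stmt_5 (H : Measure ℝ) [IsFiniteMeasure H]
    (hsupp : H (Set.Icc (0:ℝ) 1)ᶜ = 0)
    (R : ℝ → ℝ → ℝ)
    (hR : ∀ x y, R x y = ∫ w, min (w * x) ((1 - w) * y) ∂H)
    (x y : ℝ) (hx : 0 < x) (hy : 0 < y)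
    (hz : H {y / (x + y)} = 0)
    (R₁ R₂ : ℝ)
    (hR₁ : R₁ = ∫ w in Set.Ico (0:ℝ) (y / (x + y)), w ∂H)
    (hR₂ : R₂ = ∫ w in Set.Ioc (y / (x + y)) 1, (1 - w) ∂H) :
    HasFDerivAt (fun p : ℝ × ℝ => R p.1 p.2)
      (R₁ • (ContinuousLinearMap.fst ℝ ℝ ℝ) + R₂ • (ContinuousLinearMap.snd ℝ ℝ ℝ)) (x, y) ∧
    ((∫ w in Set.Icc (0:ℝ) 1, w ∂H = 1 ∧ ∫ w in Set.Icc (0:ℝ) 1, (1 - w) ∂H = 1) →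
      0 ≤ R₁ ∧ R₁ ≤ 1 ∧ 0 ≤ R₂ ∧ R₂ ≤ 1) := by
  set z : ℝ := y / (x + y) with hzdef
  have hxy : 0 < x + y := by linarith
  have hz0 : 0 < z := div_pos hy hxy
  have hz1 : z < 1 := by rw [hzdef, div_lt_one hxy]; linarith
  have hmem : ∀ᵐ w ∂H, w ∈ Icc (0:ℝ) 1 := by
    rw [ae_iff]; exact hsupp
  have hne : ∀ᵐ w ∂H, w ≠ z := by
    rw [ae_iff]; simpa using hz
  have hres : H.restrict (Icc (0:ℝ) 1) = H := Measure.restrict_eq_self_of_ae_mem hmem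
  have hwlt : ∀ w : ℝ, w < z ↔ w * x < (1 - w) * y := by
    intro w
    rw [hzdef, lt_div_iff₀ hxy]
    constructor <;> intro h <;> nlinarith
  have hwgt : ∀ w : ℝ, z < w ↔ (1 - w) * y < w * x := by
    intro w
    rw [hzdef, div_lt_iff₀ hxy]
    constructor <;> intro h <;> nlinarith
  set c₁ : ℝ → ℝ := fun w => if w < z then w else 0 with hc₁
  set c₂ : ℝ → ℝ := fun w => if w < z then 0 else 1 - w with hc₂
  set F' : ℝ → (ℝ × ℝ →L[ℝ] ℝ) := fun w =>
    c₁ w • ContinuousLinearMap.fst ℝ ℝ ℝ + c₂ w • ContinuousLinearMap.snd ℝ ℝ ℝ with hF'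
  have mc₁ : Measurable c₁ := Measurable.ite measurableSet_Iio measurable_id measurable_const
  have mc₂ : Measurable c₂ := Measurable.ite measurableSet_Iio measurable_const
    (measurable_const.sub measurable_id)
  have hic₁ : Integrable c₁ H := by
    apply Integrable.mono' (integrable_const (1:ℝ)) mc₁.aestronglyMeasurable
    filter_upwards [hmem] with w hw
    show |if w < z then w else 0| ≤ 1
    split_ifs
    · rw [abs_of_nonneg hw.1]; exact hw.2
    · simp
  have hic₂ : Integrable c₂ H := by
    apply Integrable.mono' (integrable_const (1:ℝ)) mc₂.aestronglyMeasurable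
    filter_upwards [hmem] with w hw
    show |if w < z then 0 else 1 - w| ≤ 1
    split_ifs
    · simp
    · rw [abs_of_nonneg (by linarith [hw.2])]; linarith [hw.1]
  have hF'meas : AEStronglyMeasurable F' H :=
    (mc₁.aestronglyMeasurable.smul_const _).add (mc₂.aestronglyMeasurable.smul_const _)
  have hFmeas : ∀ᶠ p in nhds ((x, y) : ℝ × ℝ),
      AEStronglyMeasurable (fun w : ℝ => min (w * p.1) ((1 - w) * p.2)) H := by
    refine Filter.Eventually.of_forall fun p => Continuous.aestronglyMeasurable ?_
    fun_prop
  have hFint : Integrable (fun w : ℝ => min (w * x) ((1 - w) * y)) H := by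
    apply Integrable.mono' (integrable_const (x:ℝ)) (Continuous.aestronglyMeasurable (by fun_prop))
    filter_upwards [hmem] with w hw
    rw [Real.norm_eq_abs,
      abs_of_nonneg (le_min (by nlinarith [hw.1, hw.2]) (by nlinarith [hw.1, hw.2]))]
    exact (min_le_left _ _).trans (by nlinarith [hw.1, hw.2])
  have hlip : ∀ᵐ w ∂H, LipschitzOnWith (Real.nnabs (1:ℝ))
      (fun p : ℝ × ℝ => min (w * p.1) ((1 - w) * p.2)) (Metric.ball ((x, y) : ℝ × ℝ) 1) := by
    filter_upwards [hmem] with w hw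
    have h1 : (Real.nnabs (1:ℝ)) = 1 := by simp
    rw [h1]
    apply LipschitzWith.lipschitzOnWith
    apply LipschitzWith.of_dist_le_mul
    intro p q
    rw [NNReal.coe_one, one_mul, Real.dist_eq, Prod.dist_eq]
    have hw1 : |w| ≤ 1 := abs_le.mpr ⟨by linarith [hw.1], hw.2⟩
    have hw2 : |1 - w| ≤ 1 := abs_le.mpr ⟨by linarith [hw.2], by linarith [hw.1]⟩
    calc |min (w * p.1) ((1 - w) * p.2) - min (w * q.1) ((1 - w) * q.2)|
        ≤ max |w * p.1 - w * q.1| |(1 - w) * p.2 - (1 - w) * q.2| :=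
          abs_min_sub_min_le_max _ _ _ _
      _ ≤ max (dist p.1 q.1) (dist p.2 q.2) := by
          apply max_le_max
          · rw [Real.dist_eq, ← mul_sub, abs_mul]
            exact mul_le_of_le_one_left (abs_nonneg _) hw1
          · rw [Real.dist_eq, ← mul_sub, abs_mul]
            exact mul_le_of_le_one_left (abs_nonneg _) hw2
  have hdiff : ∀ᵐ w ∂H, HasFDerivAt
      (fun p : ℝ × ℝ => min (w * p.1) ((1 - w) * p.2)) (F' w) ((x, y) : ℝ × ℝ) := by
    filter_upwards [hne] with w hw
    rcases hw.lt_or_gt with h | h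
    · have hlt : w * x < (1 - w) * y := (hwlt w).1 h
      have hU : IsOpen {p : ℝ × ℝ | w * p.1 < (1 - w) * p.2} :=
        isOpen_lt (by fun_prop) (by fun_prop)
      have heq : (fun p : ℝ × ℝ => min (w * p.1) ((1 - w) * p.2)) =ᶠ[nhds ((x, y) : ℝ × ℝ)]
          fun p : ℝ × ℝ => w * p.1 := by
        filter_upwards [hU.mem_nhds hlt] with p hp
        exact min_eq_left hp.le
      have hd : HasFDerivAt (fun p : ℝ × ℝ => w * p.1) (F' w) ((x, y) : ℝ × ℝ) := by
        have hFw : F' w = w • ContinuousLinearMap.fst ℝ ℝ ℝ := by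
          simp [hF', hc₁, hc₂, if_pos h]
        rw [hFw]
        exact (hasFDerivAt_fst).const_mul w
      exact hd.congr_of_eventuallyEq heq
    · have hlt : (1 - w) * y < w * x := (hwgt w).1 h
      have hU : IsOpen {p : ℝ × ℝ | (1 - w) * p.2 < w * p.1} :=
        isOpen_lt (by fun_prop) (by fun_prop)
      have heq : (fun p : ℝ × ℝ => min (w * p.1) ((1 - w) * p.2)) =ᶠ[nhds ((x, y) : ℝ × ℝ)]
          fun p : ℝ × ℝ => (1 - w) * p.2 := by
        filter_upwards [hU.mem_nhds hlt] with p hp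
        exact min_eq_right hp.le
      have hd : HasFDerivAt (fun p : ℝ × ℝ => (1 - w) * p.2) (F' w) ((x, y) : ℝ × ℝ) := by
        have hFw : F' w = (1 - w) • ContinuousLinearMap.snd ℝ ℝ ℝ := by
          simp [hF', hc₁, hc₂, if_neg (not_lt.mpr h.le)]
        rw [hFw]
        exact (hasFDerivAt_snd).const_mul (1 - w)
      exact hd.congr_of_eventuallyEq heq
  obtain ⟨-, hderiv⟩ :=
    hasFDerivAt_integral_of_dominated_loc_of_lip (μ := H) (s := Metric.ball ((x, y) : ℝ × ℝ) 1)
      (F := fun (p : ℝ × ℝ) (w : ℝ) => min (w * p.1) ((1 - w) * p.2)) (F' := F')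
      (bound := fun _ => (1:ℝ)) (Metric.ball_mem_nhds _ one_pos) hFmeas hFint hF'meas hlip (integrable_const 1) hdiff
  -- identify the derivative
  have hs1 : Iio z ∩ Icc (0:ℝ) 1 = Ico 0 z := by
    ext w
    simp only [mem_inter_iff, mem_Iio, mem_Icc, mem_Ico]
    constructor
    · rintro ⟨h1, h2, h3⟩; exact ⟨h2, h1⟩
    · rintro ⟨h1, h2⟩; exact ⟨h2, h1, by linarith⟩
  have hs2 : Ici z ∩ Icc (0:ℝ) 1 = Icc z 1 := by
    ext w
    simp only [mem_inter_iff, mem_Ici, mem_Icc]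
    constructor
    · rintro ⟨h1, h2, h3⟩; exact ⟨h1, h3⟩
    · rintro ⟨h1, h2⟩; exact ⟨h1, by linarith, h2⟩
  have h1 : ∫ w, c₁ w ∂H = R₁ := by
    have hcind : c₁ = (Iio z).indicator (fun w => w) := by
      funext w
      by_cases h : w < z
      · show (if w < z then w else 0) = _
        rw [if_pos h, indicator_of_mem (mem_Iio.mpr h)]
      · show (if w < z then w else 0) = _
        rw [if_neg h, indicator_of_notMem (by simpa using h)]
    rw [hcind, integral_indicator measurableSet_Iio, hR₁]
    conv_lhs => rw [← hres]
    rw [Measure.restrict_restrict measurableSet_Iio, hs1]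
  have h2 : ∫ w, c₂ w ∂H = R₂ := by
    have hcind : c₂ = (Ici z).indicator (fun w => 1 - w) := by
      funext w
      by_cases h : w < z
      · show (if w < z then 0 else 1 - w) = _
        rw [if_pos h, indicator_of_notMem (by simpa using h)]
      · show (if w < z then 0 else 1 - w) = _
        rw [if_neg h, indicator_of_mem (mem_Ici.mpr (not_lt.mp h))]
    rw [hcind, integral_indicator measurableSet_Ici, hR₂]
    conv_lhs => rw [← hres]
    rw [Measure.restrict_restrict measurableSet_Ici, hs2]
    apply setIntegral_congr_set
    rw [MeasureTheory.ae_eq_set]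
    constructor
    · rw [Icc_sdiff_Ioc_same hz1.le]; exact hz
    · rw [diff_eq_empty.mpr Ioc_subset_Icc_self]; exact measure_empty
  have hint : ∫ w, F' w ∂H =
      R₁ • ContinuousLinearMap.fst ℝ ℝ ℝ + R₂ • ContinuousLinearMap.snd ℝ ℝ ℝ := by
    rw [hF']
    rw [integral_add (hic₁.smul_const _) (hic₂.smul_const _), integral_smul_const,
      integral_smul_const, h1, h2]
  rw [hint] at hderiv
  constructor
  · have hfun : (fun p : ℝ × ℝ => R p.1 p.2) =
        fun p : ℝ × ℝ => ∫ w, min (w * p.1) ((1 - w) * p.2) ∂H := by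
      funext p; exact hR p.1 p.2
    rw [hfun]
    exact hderiv
  · rintro ⟨hm1, hm2⟩
    have hsub1 : Ico (0:ℝ) z ⊆ Icc 0 1 :=
      Ico_subset_Icc_self.trans (Icc_subset_Icc le_rfl hz1.le)
    have hsub2 : Ioc z (1:ℝ) ⊆ Icc 0 1 :=
      Ioc_subset_Icc_self.trans (Icc_subset_Icc hz0.le le_rfl)
    have hint1 : IntegrableOn (fun w : ℝ => w) (Icc (0:ℝ) 1) H := by
      apply Integrable.mono' (integrable_const (1:ℝ))
        measurable_id'.aestronglyMeasurable.restrict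
      filter_upwards [ae_restrict_mem measurableSet_Icc] with w hw
      rw [Real.norm_eq_abs, abs_of_nonneg hw.1]; exact hw.2
    have hint2 : IntegrableOn (fun w : ℝ => 1 - w) (Icc (0:ℝ) 1) H := by
      apply Integrable.mono' (integrable_const (1:ℝ))
        ((measurable_const.sub measurable_id').aestronglyMeasurable.restrict)
      filter_upwards [ae_restrict_mem measurableSet_Icc] with w hw
      rw [Real.norm_eq_abs]; show |1 - w| ≤ 1; rw [abs_of_nonneg (by linarith [hw.2])]; linarith [hw.1]
    have hnn1 : 0 ≤ᵐ[H.restrict (Icc (0:ℝ) 1)] fun w : ℝ => w := by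
      filter_upwards [ae_restrict_mem measurableSet_Icc] with w hw
      exact hw.1
    have hnn2 : 0 ≤ᵐ[H.restrict (Icc (0:ℝ) 1)] fun w : ℝ => 1 - w := by
      filter_upwards [ae_restrict_mem measurableSet_Icc] with w hw
      simp only [Pi.zero_apply]; linarith [hw.2]
    have hle1 : ∫ w in Ico (0:ℝ) z, w ∂H ≤ ∫ w in Icc (0:ℝ) 1, w ∂H :=
      setIntegral_mono_set hint1 hnn1 hsub1.eventuallyLE
    have hle2 : ∫ w in Ioc z (1:ℝ), (1 - w) ∂H ≤ ∫ w in Icc (0:ℝ) 1, (1 - w) ∂H :=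
      setIntegral_mono_set hint2 hnn2 hsub2.eventuallyLE
    refine ⟨?_, ?_, ?_, ?_⟩
    · rw [hR₁]
      exact setIntegral_nonneg measurableSet_Ico fun w hw => hw.1
    · rw [hR₁]
      exact hle1.trans hm1.le
    · rw [hR₂]
      exact setIntegral_nonneg measurableSet_Ioc fun w hw => by linarith [hw.2]
    · rw [hR₂]
      exact hle2.trans hm2.le
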